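/- The encoding of GCD-morphic sequences by sequences satisfying (C1) is a bijection: the map sending a positive-valued sequence c satisfying (C1) to the sequence F(n) = ∏_{j ∣ n} c(j) is a bijection between sequences satisfying (C1) and GCD-morphic sequences. -/

import Mathlib

namespace GCDMorphicAux

lemma gcd_ne_iff {n k : ℕ} : Nat.gcd n k ≠ k ↔ ¬ k ∣ n := by
  constructor
  · intro h hk; exact h (Nat.gcd_eq_right hk)
  · intro h hk; exact h (hk ▸ Nat.gcd_dvd_left n k)

lemma filter_divisors_eq {n m : ℕ} (hn : n ≠ 0) (hm : m ≠ 0) :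
    (n.divisors).filter (· ∣ m) = (Nat.gcd n m).divisors := by
  ext d
  simp only [Finset.mem_filter, Nat.mem_divisors, Nat.dvd_gcd_iff]
  constructor
  · rintro ⟨⟨h1, _⟩, h2⟩; exact ⟨⟨h1, h2⟩, Nat.gcd_ne_zero_left hn⟩
  · rintro ⟨⟨h1, h2⟩, _⟩; exact ⟨⟨h1, hn⟩, h2⟩

/-- Forward: the divisor-product of a (C1) sequence is GCD-morphic. -/
lemma fwd_gcd (c : ℕ → ℕ)
    (hC1 : ∀ k n, 1 ≤ k → k < n → Nat.gcd n k ≠ k → Nat.gcd (c n) (c k) = 1)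
    (n m : ℕ) (hn : 1 ≤ n) (hm : 1 ≤ m) :
    Nat.gcd (∏ j ∈ n.divisors, c j) (∏ j ∈ m.divisors, c j)
      = ∏ j ∈ (Nat.gcd n m).divisors, c j := by
  have hn0 : n ≠ 0 := by omega
  have hm0 : m ≠ 0 := by omega
  have key : ∀ i j, i ∣ n → ¬ i ∣ m → j ∣ m → ¬ j ∣ n → Nat.Coprime (c i) (c j) := by
    intro i j hin him hjm hjn
    have hi1 : 1 ≤ i := Nat.pos_of_dvd_of_pos hin (by omega)
    have hj1 : 1 ≤ j := Nat.pos_of_dvd_of_pos hjm (by omega)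
    rcases lt_trichotomy i j with h | h | h
    · have : ¬ i ∣ j := fun hd => him (hd.trans hjm)
      exact Nat.Coprime.symm (hC1 i j hi1 h (gcd_ne_iff.mpr this))
    · exact absurd (h ▸ hjm) him
    · have : ¬ j ∣ i := fun hd => hjn (hd.trans hin)
      exact hC1 j i hj1 h (gcd_ne_iff.mpr this)
  have splitn := Finset.prod_filter_mul_prod_filter_not n.divisors (· ∣ m) c
  have splitm := Finset.prod_filter_mul_prod_filter_not m.divisors (· ∣ n) c
  rw [filter_divisors_eq hn0 hm0] at splitn
  rw [filter_divisors_eq hm0 hn0, Nat.gcd_comm m n] at splitm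
  rw [← splitn, ← splitm, Nat.gcd_mul_left]
  have hcop : Nat.Coprime (∏ j ∈ n.divisors.filter (fun x => ¬ x ∣ m), c j)
      (∏ j ∈ m.divisors.filter (fun x => ¬ x ∣ n), c j) := by
    apply Nat.Coprime.prod_left
    intro i hi
    apply Nat.Coprime.prod_right
    intro j hj
    simp only [Finset.mem_filter, Nat.mem_divisors] at hi hj
    exact key i j hi.1.1 hi.2 hj.1.1 hj.2
  rw [hcop, mul_one]

def invc (F : ℕ → ℕ) : ℕ → ℕ
  | n => F n / ∏ d ∈ n.properDivisors.attach, invc F d.1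
  decreasing_by exact (Nat.mem_properDivisors.mp d.2).2

lemma invc_def (F : ℕ → ℕ) (n : ℕ) :
    invc F n = F n / ∏ d ∈ n.properDivisors, invc F d := by
  rw [invc, Finset.prod_attach]

lemma coprime_aux (F : ℕ → ℕ) (c : ℕ → ℕ)
    (hgcdF : ∀ n m, 1 ≤ n → 1 ≤ m → Nat.gcd (F n) (F m) = F (Nat.gcd n m))
    (a b : ℕ) (hb1 : 1 ≤ b) (hba : b < a) (hnd : ¬ b ∣ a)
    (hFa : F a = ∏ d ∈ a.divisors, c d)
    (hFb : F b = ∏ d ∈ b.divisors, c d)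
    (hFg : F (Nat.gcd a b) = ∏ d ∈ (Nat.gcd a b).divisors, c d)
    (hgpos : 0 < F (Nat.gcd a b)) (hca : 0 < c a) :
    Nat.gcd (c a) (c b) = 1 := by
  set g := Nat.gcd a b with hg
  have hg1 : 0 < g := Nat.gcd_pos_of_pos_right a hb1
  have hga : g ∣ a := Nat.gcd_dvd_left a b
  have hgb : g ∣ b := Nat.gcd_dvd_right a b
  have hgltb : g < b := by
    rcases lt_or_eq_of_le (Nat.le_of_dvd hb1 hgb) with h | h
    · exact h
    · exact absurd (h ▸ hga) hnd
  have ha0 : a ≠ 0 := by omega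
  have hb0 : b ≠ 0 := by omega
  have hsub1 : g.divisors ⊆ a.properDivisors := by
    intro d hd
    obtain ⟨hdg, -⟩ := Nat.mem_divisors.mp hd
    exact Nat.mem_properDivisors.mpr ⟨hdg.trans hga,
      lt_of_le_of_lt (Nat.le_of_dvd hg1 hdg) (hgltb.trans hba)⟩
  have hsub2 : g.divisors ⊆ b.properDivisors := by
    intro d hd
    obtain ⟨hdg, -⟩ := Nat.mem_divisors.mp hd
    exact Nat.mem_properDivisors.mpr ⟨hdg.trans hgb,
      lt_of_le_of_lt (Nat.le_of_dvd hg1 hdg) hgltb⟩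
  have hFa' : F a = c a * ∏ d ∈ a.properDivisors, c d := by
    rw [hFa, ← Nat.cons_self_properDivisors ha0, Finset.prod_cons]
  have hFb' : F b = c b * ∏ d ∈ b.properDivisors, c d := by
    rw [hFb, ← Nat.cons_self_properDivisors hb0, Finset.prod_cons]
  have h1 : c a * F g ∣ F a := by
    rw [hFa']
    exact mul_dvd_mul_left (c a)
      (hFg ▸ Finset.prod_dvd_prod_of_subset _ _ c hsub1)
  have h2 : c b * F g ∣ F b := by
    rw [hFb']
    exact mul_dvd_mul_left (c b)
      (hFg ▸ Finset.prod_dvd_prod_of_subset _ _ c hsub2)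
  set t := Nat.gcd (c a) (c b) with ht
  have ht1 : t * F g ∣ F a :=
    dvd_trans (mul_dvd_mul_right (Nat.gcd_dvd_left _ _) _) h1
  have ht2 : t * F g ∣ F b :=
    dvd_trans (mul_dvd_mul_right (Nat.gcd_dvd_right _ _) _) h2
  have htg : t * F g ∣ F g := by
    have := Nat.dvd_gcd ht1 ht2
    rwa [hgcdF a b (by omega) hb1] at this
  have hle : t * F g ≤ F g := Nat.le_of_dvd hgpos htg
  have htpos : 0 < t := Nat.gcd_pos_of_pos_left _ hca
  nlinarith [hgpos]

lemma key (F : ℕ → ℕ)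
    (hFpos : ∀ n, 1 ≤ n → 0 < F n)
    (hgcdF : ∀ n m, 1 ≤ n → 1 ≤ m → Nat.gcd (F n) (F m) = F (Nat.gcd n m)) :
    ∀ n, 1 ≤ n → F n = ∏ d ∈ n.divisors, invc F d ∧ 0 < invc F n := by
  set c := invc F with hc
  have hcdef : ∀ n, c n = F n / ∏ d ∈ n.properDivisors, c d := fun n => invc_def F n
  intro n
  induction n using Nat.strong_induction_on with
  | _ n IH =>
  intro hn1
  have hn0 : n ≠ 0 := by omega
  have hcpos : ∀ d, d < n → 1 ≤ d → 0 < c d := fun d hd h1 => (IH d hd h1).2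
  have hProdEq : ∀ d, d < n → 1 ≤ d → F d = ∏ e ∈ d.divisors, c e :=
    fun d hd h1 => (IH d hd h1).1
  have hFn0 : F n ≠ 0 := (hFpos n hn1).ne'
  have hposP : ∀ d ∈ n.properDivisors, c d ≠ 0 := by
    intro d hd
    obtain ⟨hdn, hlt⟩ := Nat.mem_properDivisors.mp hd
    exact (hcpos d hlt (Nat.pos_of_dvd_of_pos hdn (by omega))).ne'
  have hP0 : (∏ d ∈ n.properDivisors, c d) ≠ 0 := Finset.prod_ne_zero_iff.mpr hposP
  have hdvd : (∏ d ∈ n.properDivisors, c d) ∣ F n := by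
    rw [← Nat.factorization_le_iff_dvd hP0 hFn0, Nat.factorization_prod hposP]
    intro q
    rw [Finset.sum_apply']
    set T := n.properDivisors.filter (fun d => (c d).factorization q ≠ 0) with hT
    have hsumT : ∑ d ∈ n.properDivisors, (c d).factorization q
        = ∑ d ∈ T, (c d).factorization q := (Finset.sum_filter_ne_zero _).symm
    rw [hsumT]
    rcases T.eq_empty_or_nonempty with hTe | hTne
    · simp [hTe]
    set M := T.max' hTne with hM
    have hMT : M ∈ T := T.max'_mem hTne
    have hMp : M ∈ n.properDivisors := Finset.mem_of_mem_filter M hMT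
    obtain ⟨hMn, hMlt⟩ := Nat.mem_properDivisors.mp hMp
    have hM1 : 1 ≤ M := Nat.pos_of_dvd_of_pos hMn (by omega)
    have hM0 : M ≠ 0 := by omega
    have hsub : T ⊆ M.divisors := by
      intro d hd
      have hdT := hd
      rw [hT, Finset.mem_filter] at hd
      obtain ⟨hdp, hdq⟩ := hd
      obtain ⟨hdn, hdlt⟩ := Nat.mem_properDivisors.mp hdp
      have hd1 : 1 ≤ d := Nat.pos_of_dvd_of_pos hdn (by omega)
      have hdleM : d ≤ M := T.le_max' d hdT
      rcases eq_or_lt_of_le hdleM with heq | hlt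
      · exact Nat.mem_divisors.mpr ⟨heq ▸ dvd_refl M, hM0⟩
      · by_contra hnotmem
        have hndvd : ¬ d ∣ M := fun h => hnotmem (Nat.mem_divisors.mpr ⟨h, hM0⟩)
        have hgMd1 : 1 ≤ Nat.gcd M d := Nat.gcd_pos_of_pos_right M hd1
        have hgMdlt : Nat.gcd M d < n :=
          lt_of_le_of_lt (Nat.le_of_dvd hd1 (Nat.gcd_dvd_right M d)) (hdlt)
        have hcop := coprime_aux F c hgcdF M d hd1 hlt hndvd
          (hProdEq M hMlt hM1) (hProdEq d hdlt hd1)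
          (hProdEq _ hgMdlt hgMd1) (hFpos _ hgMd1) (hcpos M hMlt hM1)
        have hqM : q ∈ (c M).primeFactors := by
          rw [← Nat.support_factorization]
          exact Finsupp.mem_support_iff.mpr ((Finset.mem_filter.mp hMT).2)
        have hqd : q ∈ (c d).primeFactors := by
          rw [← Nat.support_factorization]
          exact Finsupp.mem_support_iff.mpr hdq
        have hq : q.Prime := Nat.prime_of_mem_primeFactors hqM
        have : q ∣ Nat.gcd (c M) (c d) :=
          Nat.dvd_gcd (Nat.dvd_of_mem_primeFactors hqM) (Nat.dvd_of_mem_primeFactors hqd)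
        rw [hcop] at this
        exact Nat.Prime.one_lt hq |>.ne' (Nat.eq_one_of_dvd_one this ▸ rfl)
    calc ∑ d ∈ T, (c d).factorization q
        ≤ ∑ d ∈ M.divisors, (c d).factorization q :=
          Finset.sum_le_sum_of_subset hsub
      _ = (F M).factorization q := by
          rw [hProdEq M hMlt hM1, Nat.factorization_prod]
          · rw [Finset.sum_apply']
          · intro d hd
            obtain ⟨hdM, hM0'⟩ := Nat.mem_divisors.mp hd
            have hd1 : 1 ≤ d := Nat.pos_of_dvd_of_pos hdM (by omega)
            have : d < n := lt_of_le_of_lt (Nat.le_of_dvd (by omega) hdM) hMlt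
            exact (hcpos d this hd1).ne'
      _ ≤ (F n).factorization q := by
          have hFMdvd : F M ∣ F n := by
            have := hgcdF M n hM1 hn1
            rw [Nat.gcd_eq_left hMn] at this
            exact this ▸ Nat.gcd_dvd_right (F M) (F n)
          exact (Nat.factorization_le_iff_dvd (hFpos M hM1).ne' hFn0).mpr hFMdvd q
  have hcn : c n * ∏ d ∈ n.properDivisors, c d = F n := by
    rw [hcdef n]
    exact Nat.div_mul_cancel hdvd
  have hcnpos : 0 < c n := by
    rcases Nat.eq_zero_or_pos (c n) with h | h
    · rw [h, zero_mul] at hcn; exact absurd hcn.symm hFn0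
    · exact h
  refine ⟨?_, hcnpos⟩
  rw [← Nat.cons_self_properDivisors hn0, Finset.prod_cons, hcn]

end GCDMorphicAux

open GCDMorphicAux
theorem gcd_morphic_encoding_bijection :
    ∃ e : {c : ℕ → ℕ // c 0 = 1 ∧ (∀ j, 1 ≤ j → 0 < c j) ∧
            (∀ k n, 1 ≤ k → k < n → Nat.gcd n k ≠ k → Nat.gcd (c n) (c k) = 1)} ≃
          {F : ℕ → ℕ // F 0 = 1 ∧ (∀ n, 1 ≤ n → 0 < F n) ∧
            (∀ n m, 1 ≤ n → 1 ≤ m → Nat.gcd (F n) (F m) = F (Nat.gcd n m))},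
      ∀ c n, (e c).val n = ∏ j ∈ n.divisors, c.val j := by
  set fwd : {c : ℕ → ℕ // c 0 = 1 ∧ (∀ j, 1 ≤ j → 0 < c j) ∧
      (∀ k n, 1 ≤ k → k < n → Nat.gcd n k ≠ k → Nat.gcd (c n) (c k) = 1)} →
      {F : ℕ → ℕ // F 0 = 1 ∧ (∀ n, 1 ≤ n → 0 < F n) ∧
      (∀ n m, 1 ≤ n → 1 ≤ m → Nat.gcd (F n) (F m) = F (Nat.gcd n m))} :=
    fun c => ⟨fun n => ∏ j ∈ n.divisors, c.val j,
      by simp,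
      fun n hn => Finset.prod_pos (fun j hj => c.2.2.1 j (Nat.pos_of_mem_divisors hj)),
      fun n m hn hm => fwd_gcd c.val c.2.2.2 n m hn hm⟩ with hfwd
  have hinj : Function.Injective fwd := by
    intro c c' h
    have hval : ∀ n : ℕ, (∏ j ∈ n.divisors, c.val j) = ∏ j ∈ n.divisors, c'.val j :=
      fun n => congrFun (congrArg Subtype.val h) n
    apply Subtype.ext
    funext n
    induction n using Nat.strong_induction_on with
    | _ n IH =>
    rcases Nat.eq_zero_or_pos n with h0 | hn1
    · rw [h0, c.2.1, c'.2.1]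
    · have hn0 : n ≠ 0 := by omega
      have h1 := hval n
      rw [← Nat.cons_self_properDivisors hn0, Finset.prod_cons, Finset.prod_cons] at h1
      have hprop : (∏ d ∈ n.properDivisors, c.val d) = ∏ d ∈ n.properDivisors, c'.val d := by
        apply Finset.prod_congr rfl
        intro d hd
        exact IH d (Nat.mem_properDivisors.mp hd).2
      rw [hprop] at h1
      have hpos : 0 < ∏ d ∈ n.properDivisors, c'.val d := by
        apply Finset.prod_pos
        intro d hd
        obtain ⟨hdn, hlt⟩ := Nat.mem_properDivisors.mp hd
        exact c'.2.2.1 d (Nat.pos_of_dvd_of_pos hdn (by omega))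
      exact Nat.eq_of_mul_eq_mul_right hpos h1
  have hsurj : Function.Surjective fwd := by
    rintro ⟨F, hF0, hFpos, hgcdF⟩
    have hkey := key F hFpos hgcdF
    have hc0 : invc F 0 = 1 := by
      rw [invc_def]
      simp [hF0]
    have hcpos : ∀ j, 1 ≤ j → 0 < invc F j := fun j hj => (hkey j hj).2
    have hC1 : ∀ k n, 1 ≤ k → k < n → Nat.gcd n k ≠ k →
        Nat.gcd (invc F n) (invc F k) = 1 := by
      intro k n hk1 hkn hne
      have hn1 : 1 ≤ n := by omega
      have hg1 : 1 ≤ Nat.gcd n k := Nat.gcd_pos_of_pos_right n hk1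
      exact coprime_aux F (invc F) hgcdF n k hk1 hkn (gcd_ne_iff.mp hne)
        (hkey n hn1).1 (hkey k hk1).1 (hkey _ hg1).1 (hFpos _ hg1) (hcpos n hn1)
    refine ⟨⟨invc F, hc0, hcpos, hC1⟩, ?_⟩
    apply Subtype.ext
    funext n
    show (∏ j ∈ n.divisors, invc F j) = F n
    rcases Nat.eq_zero_or_pos n with h0 | hn1
    · rw [h0]; simp [hF0]
    · exact ((hkey n hn1).1).symm
  exact ⟨Equiv.ofBijective fwd ⟨hinj, hsurj⟩, fun c n => rfl⟩
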